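/- If S ⊆ H is a compact set (dim H = d < ∞) such that the fundamental group π₁(H \ S) is nontrivial, then dem(S) ≥ d − 2. -/

import Mathlib

set_option linter.unusedSectionVars false

open Metric Module Set MeasureTheory
open scoped ENNReal NNReal

noncomputable section

variable {H : Type*} [NormedAddCommGroup H] [InnerProductSpace ℝ H] [FiniteDimensional ℝ H]

/-- `P` is a piecewise linear polyhedron of dimension `m`: a finite nonempty union of
`m`-simplices (convex hulls of `m + 1` affinely independent points). -/
def IsPLPolyhedron (m : ℕ) (P : Set H) : Prop :=
  ∃ (n : ℕ) (pts : Fin (n + 1) → Fin (m + 1) → H),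
    (∀ i, AffineIndependent ℝ (pts i)) ∧
    P = ⋃ i, convexHull ℝ (Set.range (pts i))

/-- `dem S ≥ k` (Štan'ko's demension): there exist a PL polyhedron `P` of dimension
`d − k` (`d = dim H`) and `ε > 0` such that every `ε`-small ambient isotopy that fixes the
complement of the `ε`-neighborhood of `P ∩ S` carries `P` onto a set meeting `S`. -/
def DemGE (S : Set H) (k : ℕ) : Prop :=
  ∃ (P : Set H) (ε : ℝ), 0 < ε ∧ IsPLPolyhedron (finrank ℝ H - k) P ∧
    ∀ F : ℝ → H → H, Continuous (fun p : ℝ × H => F p.1 p.2) →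
      (∀ t ∈ Set.Icc (0 : ℝ) 1, IsHomeomorph (F t)) → F 0 = id →
      (∀ t ∈ Set.Icc (0 : ℝ) 1, ∀ x, dist x (F t x) ≤ ε) →
      (∀ t ∈ Set.Icc (0 : ℝ) 1, ∀ x ∉ thickening ε (P ∩ S), F t x = x) →
      (F 1 '' P ∩ S).Nonempty

/-- `dem S = k`: `k` is the largest integer with `dem S ≥ k`. -/
def DemEq (S : Set H) (k : ℕ) : Prop :=
  DemGE S k ∧ ∀ m : ℕ, DemGE S m → m ≤ k

section Helpers

open unitInterval CategoryTheory

attribute [local instance] Path.Homotopic.setoid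

lemma exists_loop_not_homotopic {X : Type*} [TopologicalSpace X] (x : X)
    (h : Nontrivial (FundamentalGroup X x)) :
    ∃ γ : Path x x, ¬ γ.Homotopic (Path.refl x) := by
  obtain ⟨a, b, hab⟩ := h
  have hc : a * b⁻¹ ≠ 1 := by
    intro hh
    exact hab (by rwa [mul_inv_eq_one] at hh)
  have hhom : ((a * b⁻¹ : FundamentalGroup X x) : Path.Homotopic.Quotient x x) ≠ ⟦Path.refl x⟧ := by
    intro hh
    exact hc hh
  obtain ⟨γ, hγ⟩ := Quotient.exists_rep ((a * b⁻¹ : FundamentalGroup X x) : Path.Homotopic.Quotient x x)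
  refine ⟨γ, fun hh => hhom ?_⟩
  rw [← hγ]
  exact Quotient.sound hh

end Helpers
section PartHelpers
open unitInterval
lemma mkHomotopic {X : Type*} [TopologicalSpace X] {a : X} (p q : Path a a)
    (k : I × I → X) (hk : Continuous k)
    (h0 : ∀ t, k (0, t) = p t) (h1 : ∀ t, k (1, t) = q t)
    (he0 : ∀ s, k (s, 0) = a) (he1 : ∀ s, k (s, 1) = a) : p.Homotopic q := by
  refine ⟨{ toFun := k, continuous_toFun := hk, map_zero_left := h0, map_one_left := h1,
            prop' := ?_ }⟩
  intro s t ht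
  rcases ht with rfl | ht
  · simp only [ContinuousMap.coe_mk, Path.coe_toContinuousMap]
    rw [he0 s, p.source]
  · rcases ht with rfl
    simp only [ContinuousMap.coe_mk, Path.coe_toContinuousMap]
    rw [he1 s, p.target]

lemma homotopic_refl_of_segments (S : Set H) {x : H} (hx : x ∈ Sᶜ)
    (γ : Path (⟨x, hx⟩ : ↥(Sᶜ)) ⟨x, hx⟩)
    (hseg : ∀ t s : I, (1 - (s : ℝ)) • ((γ t : H)) + (s : ℝ) • x ∉ S) :
    γ.Homotopic (Path.refl (⟨x, hx⟩ : ↥(Sᶜ))) := by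
  have hγ0 : ((γ 0 : H)) = x := congrArg Subtype.val γ.source
  have hγ1 : ((γ 1 : H)) = x := congrArg Subtype.val γ.target
  refine mkHomotopic γ (Path.refl _)
    (fun p : I × I => Subtype.mk ((1 - (p.1 : ℝ)) • ((γ p.2 : H)) + (p.1 : ℝ) • x) (hseg p.2 p.1))
    ?_ ?_ ?_ ?_ ?_
  · refine Continuous.subtype_mk ?_ _
    exact ((continuous_const.sub (continuous_subtype_val.comp continuous_fst)).smul
      (continuous_subtype_val.comp (γ.continuous.comp continuous_snd))).add
      ((continuous_subtype_val.comp continuous_fst).smul continuous_const)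
  · intro t
    apply Subtype.ext
    show (1 - ((0 : I) : ℝ)) • ((γ t : H)) + ((0 : I) : ℝ) • x = _
    norm_num
  · intro t
    apply Subtype.ext
    show (1 - ((1 : I) : ℝ)) • ((γ t : H)) + ((1 : I) : ℝ) • x = _
    norm_num
  · intro s
    apply Subtype.ext
    show (1 - (s : ℝ)) • ((γ 0 : H)) + (s : ℝ) • x = x
    rw [hγ0, sub_smul, one_smul, sub_add_cancel]
  · intro s
    apply Subtype.ext
    show (1 - (s : ℝ)) • ((γ 1 : H)) + (s : ℝ) • x = x
    rw [hγ1, sub_smul, one_smul, sub_add_cancel]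

lemma affInd_of_linInd (o a b : H) (h : LinearIndependent ℝ ![a - o, b - o]) :
    AffineIndependent ℝ ![o, a, b] := by
  rw [affineIndependent_iff_not_collinear_set]
  intro hc
  rw [collinear_iff_of_mem (Set.mem_insert o _)] at hc
  obtain ⟨w, hw⟩ := hc
  obtain ⟨t, ht⟩ := hw a (by simp)
  obtain ⟨s, hs⟩ := hw b (by simp)
  rw [linearIndependent_fin2] at h
  have h1 : a - o = t • w := by
    rw [ht]; simp [vadd_eq_add]
  have h2 : b - o = s • w := by
    rw [hs]; simp [vadd_eq_add]
  simp only [Matrix.cons_val_one, Matrix.head_cons, Matrix.cons_val_zero] at h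
  rcases eq_or_ne s 0 with rfl | hs0
  · exact h.1 (by rw [h2, zero_smul])
  · exact h.2 (t / s) (by rw [h1, h2, smul_smul, div_mul_cancel₀ _ hs0])

lemma exists_linIndep_pair (h2 : 2 ≤ finrank ℝ H) :
    ∃ u v : H, LinearIndependent ℝ ![u, v] := by
  obtain ⟨f, hf⟩ := exists_linearIndependent_of_le_finrank (n := 2) h2
  exact ⟨f 0, f 1, by
    convert hf using 1
    ext i
    fin_cases i <;> simp⟩

lemma exists_triangle_segment (h2 : 2 ≤ finrank ℝ H) (p q : H) :
    ∃ f : Fin 3 → H, AffineIndependent ℝ f ∧ segment ℝ p q ⊆ convexHull ℝ (Set.range f) := by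
  obtain ⟨u, v, huv⟩ := exists_linIndep_pair h2
  have huv' := linearIndependent_fin2.mp huv
  simp only [Matrix.cons_val_one, Matrix.head_cons, Matrix.cons_val_zero] at huv'
  by_cases hc1 : LinearIndependent ℝ ![u, q - p]
  · refine ⟨![p, p + u, q], affInd_of_linInd _ _ _ (by simpa using hc1), ?_⟩
    rw [← convexHull_pair]
    apply convexHull_mono
    intro y hy
    rcases hy with rfl | hy
    · exact ⟨0, rfl⟩
    · rcases hy with rfl; exact ⟨2, rfl⟩
  · by_cases hc2 : LinearIndependent ℝ ![v, q - p]
    · refine ⟨![p, p + v, q], affInd_of_linInd _ _ _ (by simpa using hc2), ?_⟩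
      rw [← convexHull_pair]
      apply convexHull_mono
      intro y hy
      rcases hy with rfl | hy
      · exact ⟨0, rfl⟩
      · rcases hy with rfl; exact ⟨2, rfl⟩
    · -- q = p
      have hqp : q = p := by
        rw [linearIndependent_fin2, not_and_or] at hc1 hc2
        simp only [Matrix.cons_val_one, Matrix.head_cons, Matrix.cons_val_zero, ne_eq,
          not_not, not_forall] at hc1 hc2
        rcases hc1 with h | ⟨a, ha⟩
        · rwa [sub_eq_zero] at h
        rcases hc2 with h | ⟨b, hb⟩
        · rwa [sub_eq_zero] at h
        -- a • (q - p) = u, b • (q - p) = v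
        rcases eq_or_ne (q - p) 0 with h0 | h0
        · rwa [sub_eq_zero] at h0
        exfalso
        have hb0 : b ≠ 0 := by rintro rfl; rw [zero_smul] at hb; exact huv'.1 hb.symm
        exact huv'.2 (a / b) (by rw [← ha, ← hb, smul_smul, div_mul_cancel₀ _ hb0])
      refine ⟨![p, p + u, p + v], affInd_of_linInd _ _ _ (by simpa using huv), ?_⟩
      rw [hqp, segment_same]
      rintro y rfl
      exact subset_convexHull ℝ _ ⟨0, rfl⟩

lemma exists_triangle (h2 : 2 ≤ finrank ℝ H) (a b c : H) :
    ∃ f : Fin 3 → H, AffineIndependent ℝ f ∧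
      convexHull ℝ ({a, b, c} : Set H) ⊆ convexHull ℝ (Set.range f) := by
  by_cases hind : AffineIndependent ℝ ![a, b, c]
  · refine ⟨![a, b, c], hind, ?_⟩
    apply convexHull_mono
    intro y hy
    rcases hy with rfl | hy
    · exact ⟨0, rfl⟩
    rcases hy with rfl | hy
    · exact ⟨1, rfl⟩
    rcases hy with rfl
    exact ⟨2, rfl⟩
  · have hcol : Collinear ℝ ({a, b, c} : Set H) :=
      collinear_iff_not_affineIndependent_set.mpr hind
    have hsub : ∃ p q : H, ({a, b, c} : Set H) ⊆ segment ℝ p q := by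
      rcases hcol.wbtw_or_wbtw_or_wbtw with h | h | h
      · exact ⟨a, c, by
          rintro y (rfl | rfl | rfl)
          · exact left_mem_segment ℝ _ _
          · exact h.mem_segment
          · exact right_mem_segment ℝ _ _⟩
      · exact ⟨b, a, by
          rintro y (rfl | rfl | rfl)
          · exact right_mem_segment ℝ _ _
          · exact left_mem_segment ℝ _ _
          · exact h.mem_segment⟩
      · exact ⟨c, b, by
          rintro y (rfl | rfl | rfl)
          · exact h.mem_segment
          · exact right_mem_segment ℝ _ _
          · exact left_mem_segment ℝ _ _⟩
    obtain ⟨p, q, hpq⟩ := hsub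
    obtain ⟨f, hf1, hf2⟩ := exists_triangle_segment h2 p q
    exact ⟨f, hf1, (convexHull_min hpq (convex_segment p q)).trans hf2⟩

def clamp01 (r : ℝ) : ℝ := max 0 (min 1 r)

lemma clamp01_continuous : Continuous clamp01 :=
  continuous_const.max (continuous_const.min continuous_id)

lemma clamp01_of_nonpos {r : ℝ} (h : r ≤ 0) : clamp01 r = 0 := by
  unfold clamp01; rw [max_eq_left]; exact (min_le_right _ _).trans h

lemma clamp01_of_one_le {r : ℝ} (h : 1 ≤ r) : clamp01 r = 1 := by
  unfold clamp01; rw [min_eq_left h, max_eq_right zero_le_one]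

lemma clamp01_of_mem {r : ℝ} (h0 : 0 ≤ r) (h1 : r ≤ 1) : clamp01 r = r := by
  unfold clamp01; rw [min_eq_right h1, max_eq_right h0]

/-- piecewise linear path through points `v 0, v 1, ..., v n`, parametrized on `[0,1]`. -/
def polyg (n : ℕ) (v : ℕ → H) (u : ℝ) : H :=
  v 0 + ∑ j ∈ Finset.range n, clamp01 (n * u - j) • (v (j + 1) - v j)

lemma polyg_continuous (n : ℕ) (v : ℕ → H) : Continuous (polyg n v) := by
  unfold polyg
  refine continuous_const.add (continuous_finset_sum _ fun j _ => ?_)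
  exact ((clamp01_continuous.comp ((continuous_const.mul continuous_id).sub
    continuous_const)).smul continuous_const)

lemma polyg_zero (n : ℕ) (v : ℕ → H) : polyg n v 0 = v 0 := by
  unfold polyg
  rw [Finset.sum_eq_zero, add_zero]
  intro j hj
  rw [clamp01_of_nonpos (by rw [mul_zero, zero_sub]; exact neg_nonpos.mpr (Nat.cast_nonneg j)),
    zero_smul]

lemma polyg_one (n : ℕ) (v : ℕ → H) : polyg n v 1 = v n := by
  unfold polyg
  have : ∀ j ∈ Finset.range n, clamp01 ((n : ℝ) * 1 - j) • (v (j + 1) - v j)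
      = v (j + 1) - v j := by
    intro j hj
    rw [clamp01_of_one_le, one_smul]
    rw [Finset.mem_range] at hj
    have : (j : ℝ) + 1 ≤ n := by exact_mod_cast hj
    linarith
  rw [Finset.sum_congr rfl this, Finset.sum_range_sub, add_sub_cancel]

lemma polyg_piece (n : ℕ) (v : ℕ → H) (i : ℕ) (hi : i < n) (u : ℝ)
    (h1 : (i : ℝ) / n ≤ u) (h2 : u ≤ ((i : ℝ) + 1) / n) :
    polyg n v u = v i + ((n : ℝ) * u - i) • (v (i + 1) - v i) := by
  have hn : 0 < (n : ℝ) := by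
    have : 0 < n := lt_of_le_of_lt (Nat.zero_le i) hi
    exact_mod_cast this
  have hnu1 : (i : ℝ) ≤ n * u := by
    rw [div_le_iff₀ hn] at h1
    nlinarith
  have hnu2 : (n : ℝ) * u ≤ (i : ℝ) + 1 := by
    rw [le_div_iff₀ hn] at h2
    nlinarith
  unfold polyg
  have hsub : Finset.range (i + 1) ⊆ Finset.range n := Finset.range_subset_range.mpr hi
  rw [← Finset.sum_subset hsub (by
    intro j hj hj'
    rw [Finset.mem_range] at hj
    rw [Finset.mem_range, not_lt] at hj'
    have : (n : ℝ) * u - j ≤ 0 := by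
      have : ((i : ℝ) + 1) ≤ (j : ℝ) := by exact_mod_cast hj'
      linarith
    rw [clamp01_of_nonpos this, zero_smul])]
  rw [Finset.sum_range_succ]
  have hhead : ∀ j ∈ Finset.range i, clamp01 ((n : ℝ) * u - j) • (v (j + 1) - v j)
      = v (j + 1) - v j := by
    intro j hj
    rw [Finset.mem_range] at hj
    have : (j : ℝ) + 1 ≤ (i : ℝ) := by exact_mod_cast hj
    rw [clamp01_of_one_le (by linarith), one_smul]
  rw [Finset.sum_congr rfl hhead, Finset.sum_range_sub,
    clamp01_of_mem (by linarith) (by linarith)]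
  abel


lemma polyg_mem_segment (n : ℕ) (v : ℕ → H) (i : ℕ) (hi : i < n) (u : ℝ)
    (h1 : (i : ℝ) / n ≤ u) (h2 : u ≤ ((i : ℝ) + 1) / n) :
    polyg n v u ∈ segment ℝ (v i) (v (i + 1)) := by
  have hn : 0 < (n : ℝ) := by
    have : 0 < n := lt_of_le_of_lt (Nat.zero_le i) hi
    exact_mod_cast this
  have hnu1 : (i : ℝ) ≤ n * u := by rw [div_le_iff₀ hn] at h1; nlinarith
  have hnu2 : (n : ℝ) * u ≤ (i : ℝ) + 1 := by rw [le_div_iff₀ hn] at h2; nlinarith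
  rw [polyg_piece n v i hi u h1 h2]
  refine ⟨1 - ((n : ℝ) * u - i), (n : ℝ) * u - i, by linarith, by linarith, by ring, ?_⟩
  module

lemma exists_piece_index (n : ℕ) (hn : 0 < n) (u : ℝ) (h0 : 0 ≤ u) (h1 : u ≤ 1) :
    ∃ i : ℕ, i < n ∧ (i : ℝ) / n ≤ u ∧ u ≤ ((i : ℝ) + 1) / n := by
  have hnr : 0 < (n : ℝ) := by exact_mod_cast hn
  rcases eq_or_lt_of_le h1 with rfl | hu1
  · exact ⟨n - 1, Nat.sub_lt hn one_pos, by
      rw [div_le_one hnr]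
      have : ((n - 1 : ℕ) : ℝ) = (n : ℝ) - 1 := by
        rw [Nat.cast_sub hn]; simp
      rw [this]; linarith, by
      have : ((n - 1 : ℕ) : ℝ) = (n : ℝ) - 1 := by
        rw [Nat.cast_sub hn]; simp
      rw [this, sub_add_cancel, le_div_iff₀ hnr, one_mul]⟩
  · have hnu0 : 0 ≤ (n : ℝ) * u := by positivity
    refine ⟨⌊(n : ℝ) * u⌋₊, ?_, ?_, ?_⟩
    · exact (Nat.floor_lt hnu0).mpr (by nlinarith)
    · rw [div_le_iff₀ hnr]
      have := Nat.floor_le hnu0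
      nlinarith
    · rw [le_div_iff₀ hnr]
      have := Nat.lt_floor_add_one ((n : ℝ) * u)
      nlinarith

lemma convex_of_preconnected_of_finrank_le_one (h1 : finrank ℝ H ≤ 1) {A : Set H}
    (hA : IsPreconnected A) : Convex ℝ A := by
  rcases Nat.le_one_iff_eq_zero_or_eq_one.mp h1 with h0 | h1
  · have : Subsingleton H := finrank_zero_iff.mp h0
    intro x hx y hy a b ha hb hab
    have : a • x + b • y = x := Subsingleton.elim _ _
    rwa [this]
  · let e : H ≃L[ℝ] ℝ := ContinuousLinearEquiv.ofFinrankEq (by rw [h1, finrank_self])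
    have him : IsPreconnected ((e : H → ℝ) '' A) := hA.image _ e.continuous.continuousOn
    have hcv : Convex ℝ ((e : H → ℝ) '' A) := him.ordConnected.convex
    have hAeq : A = (e : H → ℝ) ⁻¹' ((e : H → ℝ) '' A) :=
      (Set.preimage_image_eq A e.injective).symm
    rw [hAeq]
    exact hcv.linear_preimage (e : H →ₗ[ℝ] ℝ)
end PartHelpers

section MainProof
open unitInterval

/-- **Nontrivial fundamental group of the complement forces demension `≥ d − 2`.**
If `S ⊆ H` (`dim H = d < ∞`) is compact and `π₁(H \ S)` is nontrivial, then
`dem S ≥ d − 2`. -/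
theorem demGE_of_pi1_nontrivial
    (S : Set H) (hcpt : IsCompact S)
    (h : ∃ (x : H) (hx : x ∈ Sᶜ), Nontrivial (FundamentalGroup (Sᶜ : Set H) ⟨x, hx⟩)) :
    DemGE S (finrank ℝ H - 2) := by
  obtain ⟨x, hx, hnt⟩ := h
  obtain ⟨γ₀, hγ₀⟩ := exists_loop_not_homotopic _ hnt
  set f : I → H := fun t => ((γ₀ t : H)) with hfdef
  have hf : Continuous f := continuous_subtype_val.comp γ₀.continuous
  have hfS : ∀ t, f t ∉ S := fun t => (γ₀ t).2
  have hf0 : f 0 = x := congrArg Subtype.val γ₀.source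
  have hf1 : f 1 = x := congrArg Subtype.val γ₀.target
  by_cases hdeg : finrank ℝ H ≤ 1 ∨ S = ∅
  · exfalso
    apply hγ₀
    apply homotopic_refl_of_segments S hx γ₀
    intro t s
    rcases hdeg with hd | rfl
    · have hconv : Convex ℝ (Set.range f) :=
        convex_of_preconnected_of_finrank_le_one hd (isPreconnected_range hf)
      have hmem : (1 - (s : ℝ)) • f t + (s : ℝ) • x ∈ Set.range f := by
        have h1 : f t ∈ Set.range f := ⟨t, rfl⟩
        have h2 : x ∈ Set.range f := ⟨0, hf0⟩
        exact hconv h1 h2 (by linarith [s.2.2]) s.2.1 (by ring)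
      obtain ⟨t', ht'⟩ := hmem
      rw [← ht']
      exact hfS t'
    · simp
  push_neg at hdeg
  obtain ⟨hrk', hSne'⟩ := hdeg
  have hrk : 2 ≤ finrank ℝ H := by omega
  have hSne : S.Nonempty := hSne'
  have hScl : IsClosed S := hcpt.isClosed
  -- minimal distance δ from the loop to S
  obtain ⟨t₀, -, ht₀⟩ := isCompact_univ.exists_isMinOn univ_nonempty
    ((continuous_infDist_pt S).comp hf).continuousOn
  set δ := infDist (f t₀) S with hδdef
  have hδpos : 0 < δ := (hScl.notMem_iff_infDist_pos hSne).mp (hfS t₀)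
  have hdist : ∀ (t : I), ∀ z ∈ S, δ ≤ dist (f t) z := by
    intro t z hz
    calc δ ≤ infDist (f t) S := ht₀ (Set.mem_univ t)
    _ ≤ dist (f t) z := infDist_le_dist_of_mem hz
  -- uniform continuity modulus
  obtain ⟨η, hηpos, hmod⟩ := Metric.uniformContinuous_iff.mp
    (CompactSpace.uniformContinuous_of_continuous hf) (δ / 4) (by positivity)
  obtain ⟨N, hN⟩ := exists_nat_one_div_lt hηpos
  set n := N + 1 with hndef
  have hn0 : 0 < n := Nat.succ_pos N
  have hnr : (0 : ℝ) < (n : ℝ) := by exact_mod_cast hn0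
  have hinv : 1 / (n : ℝ) < η := by
    have : ((n : ℕ) : ℝ) = (N : ℝ) + 1 := by rw [hndef]; push_cast; ring
    rw [this]
    exact hN
  set fe : ℝ → H := fun r => f (Set.projIcc 0 1 zero_le_one r) with hfedef
  have hfe_eq : ∀ t : I, fe (t : ℝ) = f t := by
    intro t
    rw [hfedef]
    simp only []
    rw [Set.projIcc_of_mem zero_le_one t.2]
  have hfemod : ∀ a b : ℝ, dist a b < η → dist (fe a) (fe b) < δ / 4 := by
    intro a b hab
    apply hmod
    calc dist (Set.projIcc 0 1 zero_le_one a) (Set.projIcc 0 1 zero_le_one b)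
        ≤ 1 * dist a b := by
          simpa using (LipschitzWith.projIcc (zero_le_one)).dist_le_mul a b
    _ = dist a b := one_mul _
    _ < η := hab
  have hfeS : ∀ (r : ℝ), ∀ z ∈ S, δ ≤ dist (fe r) z := fun r z hz => hdist _ z hz
  set v : ℕ → H := fun j => fe ((j : ℝ) / (n : ℝ)) with hvdef
  set g : ℝ → H := polyg n v with hgdef
  have hgc : Continuous g := polyg_continuous n v
  have hv0 : v 0 = x := by
    rw [hvdef]
    simp only [Nat.cast_zero, zero_div]
    rw [hfedef]
    simp only []
    rw [Set.projIcc_left]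
    exact hf0
  have hvn : v n = x := by
    rw [hvdef]
    simp only []
    rw [div_self hnr.ne', hfedef]
    simp only []
    rw [Set.projIcc_right]
    exact hf1
  have hg0 : g 0 = x := by rw [hgdef, polyg_zero]; exact hv0
  have hg1 : g 1 = x := by rw [hgdef, polyg_one]; exact hvn
  -- vertices near fe u
  have hveq : ∀ (i : ℕ) (u : ℝ), (i : ℝ) / n ≤ u → u ≤ ((i : ℝ) + 1) / n →
      dist (v i) (fe u) ≤ δ / 4 ∧ dist (v (i + 1)) (fe u) ≤ δ / 4 := by
    intro i u h1 h2
    have hsplit : ((i : ℝ) + 1) / n = (i : ℝ) / n + 1 / n := by ring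
    rw [hsplit] at h2
    constructor
    · refine (hfemod _ _ ?_).le
      rw [Real.dist_eq, abs_lt]
      constructor
      · linarith
      · linarith
    · have hcast : ((i + 1 : ℕ) : ℝ) = (i : ℝ) + 1 := by push_cast; ring
      refine (hfemod _ _ ?_).le
      rw [Real.dist_eq, abs_lt, hcast, hsplit]
      constructor
      · linarith
      · linarith
  -- key covering fact
  have key : ∀ u : ℝ, 0 ≤ u → u ≤ 1 →
      ∃ i : ℕ, i < n ∧ g u ∈ segment ℝ (v i) (v (i + 1)) ∧ dist (g u) (fe u) ≤ δ / 4 := by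
    intro u h0 h1
    obtain ⟨i, hi, hi1, hi2⟩ := exists_piece_index n hn0 u h0 h1
    have hseg : g u ∈ segment ℝ (v i) (v (i + 1)) := by
      rw [hgdef]; exact polyg_mem_segment n v i hi u hi1 hi2
    have hd := hveq i u hi1 hi2
    refine ⟨i, hi, hseg, ?_⟩
    have hball : segment ℝ (v i) (v (i + 1)) ⊆ closedBall (fe u) (δ / 4) :=
      (convex_closedBall _ _).segment_subset (mem_closedBall.mpr hd.1)
        (mem_closedBall.mpr hd.2)
    exact mem_closedBall.mp (hball hseg)
  have hgS : ∀ u : ℝ, 0 ≤ u → u ≤ 1 → ∀ z ∈ S, δ / 2 ≤ dist (g u) z := by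
    intro u h0 h1 z hz
    obtain ⟨i, -, -, hd⟩ := key u h0 h1
    have h2 := hfeS u z hz
    have h3 := dist_triangle (fe u) (g u) z
    rw [dist_comm (fe u) (g u)] at h3
    linarith
  have hgnotS : ∀ t : I, g (t : ℝ) ∉ S := by
    intro t ht
    have := hgS t t.2.1 t.2.2 _ ht
    rw [dist_self] at this
    linarith
  set gPath : Path (⟨x, hx⟩ : ↥(Sᶜ)) ⟨x, hx⟩ :=
    { toContinuousMap := ⟨fun t => ⟨g (t : ℝ), hgnotS t⟩,
        (hgc.comp continuous_subtype_val).subtype_mk _⟩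
      source' := Subtype.ext (by simpa using hg0)
      target' := Subtype.ext (by simpa using hg1) } with hgPdef
  -- homotopy from γ₀ to gPath
  have hmid : ∀ (s t : I), (1 - (s : ℝ)) • f t + (s : ℝ) • g (t : ℝ) ∉ S := by
    intro s t hmem
    obtain ⟨i, -, -, hd⟩ := key t t.2.1 t.2.2
    rw [hfe_eq t] at hd
    have hclose : dist ((1 - (s : ℝ)) • f t + (s : ℝ) • g (t : ℝ)) (f t) ≤ δ / 4 := by
      rw [dist_eq_norm]
      have he : (1 - (s : ℝ)) • f t + (s : ℝ) • g (t : ℝ) - f t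
          = (s : ℝ) • (g (t : ℝ) - f t) := by module
      rw [he, norm_smul]
      have hgf : ‖g (t : ℝ) - f t‖ ≤ δ / 4 := by rwa [dist_eq_norm] at hd
      calc |(s : ℝ)| * ‖g (t : ℝ) - f t‖ ≤ 1 * (δ / 4) := by
            apply mul_le_mul _ hgf (norm_nonneg _) zero_le_one
            rw [abs_of_nonneg s.2.1]; exact s.2.2
      _ = δ / 4 := one_mul _
    have h2 := hdist t _ hmem
    rw [dist_comm] at h2
    linarith
  have hom1 : γ₀.Homotopic gPath := by
    refine mkHomotopic γ₀ gPath
      (fun p : I × I => Subtype.mk ((1 - (p.1 : ℝ)) • f p.2 + (p.1 : ℝ) • g ((p.2 : ℝ)))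
        (hmid p.1 p.2)) ?_ ?_ ?_ ?_ ?_
    · refine Continuous.subtype_mk ?_ _
      exact ((continuous_const.sub (continuous_subtype_val.comp continuous_fst)).smul
        (hf.comp continuous_snd)).add ((continuous_subtype_val.comp continuous_fst).smul
        (hgc.comp (continuous_subtype_val.comp continuous_snd)))
    · intro t
      apply Subtype.ext
      show (1 - ((0 : I) : ℝ)) • f t + ((0 : I) : ℝ) • g (t : ℝ) = (γ₀ t : H)
      norm_num
      rfl
    · intro t
      apply Subtype.ext
      show (1 - ((1 : I) : ℝ)) • f t + ((1 : I) : ℝ) • g (t : ℝ) = _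
      norm_num
      rfl
    · intro s
      apply Subtype.ext
      show (1 - (s : ℝ)) • f 0 + (s : ℝ) • g ((0 : I) : ℝ) = x
      have hc0 : ((0 : I) : ℝ) = 0 := rfl
      rw [hc0, hf0, hg0, sub_smul, one_smul, sub_add_cancel]
    · intro s
      apply Subtype.ext
      show (1 - (s : ℝ)) • f 1 + (s : ℝ) • g ((1 : I) : ℝ) = x
      have hc1 : ((1 : I) : ℝ) = 1 := rfl
      rw [hc1, hf1, hg1, sub_smul, one_smul, sub_add_cancel]
  -- triangles containing the cone pieces
  have hT : ∀ i : Fin n, ∃ qq : Fin 3 → H, AffineIndependent ℝ qq ∧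
      convexHull ℝ ({x, v (i : ℕ), v ((i : ℕ) + 1)} : Set H) ⊆ convexHull ℝ (Set.range qq) :=
    fun i => exists_triangle hrk x (v (i : ℕ)) (v ((i : ℕ) + 1))
  choose q hq1 hq2 using hT
  set P : Set H := ⋃ i : Fin n, convexHull ℝ (Set.range (q i)) with hPdef
  refine ⟨P, δ / 4, by positivity, ?_, ?_⟩
  · have h2 : finrank ℝ H - (finrank ℝ H - 2) = 2 := by omega
    rw [h2]
    exact ⟨N, q, hq1, hPdef⟩
  · intro F hFc hFh hF0 hFsmall hFfix
    by_contra hempty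
    rw [Set.not_nonempty_iff_eq_empty] at hempty
    have hdisj : ∀ y ∈ F 1 '' P, y ∉ S := by
      intro y hy hyS
      have : y ∈ F 1 '' P ∩ S := ⟨hy, hyS⟩
      rw [hempty] at this
      exact this
    have hone : (1 : ℝ) ∈ Set.Icc (0 : ℝ) 1 := ⟨zero_le_one, le_rfl⟩
    have hfix : ∀ p : H, (∀ z ∈ S, δ / 2 ≤ dist p z) → F 1 p = p := by
      intro p hp
      apply hFfix 1 hone
      intro hmem
      rw [mem_thickening_iff] at hmem
      obtain ⟨z, hzPS, hdz⟩ := hmem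
      have := hp z hzPS.2
      linarith
    have hxfar : ∀ z ∈ S, δ / 2 ≤ dist x z := by
      intro z hz
      have := hdist 0 z hz
      rw [hf0] at this
      linarith
    have hcone : ∀ (s t : I), (1 - (s : ℝ)) • g (t : ℝ) + (s : ℝ) • x ∈ P := by
      intro s t
      obtain ⟨i, hi, hseg, -⟩ := key t t.2.1 t.2.2
      set D := convexHull ℝ ({x, v i, v (i + 1)} : Set H) with hDdef
      have hgD : g (t : ℝ) ∈ D := by
        have hsub : segment ℝ (v i) (v (i + 1)) ⊆ D := by
          rw [← convexHull_pair]
          exact convexHull_mono (Set.subset_insert x _)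
        exact hsub hseg
      have hxD : x ∈ D := subset_convexHull ℝ _ (Set.mem_insert x _)
      have hmemD : (1 - (s : ℝ)) • g (t : ℝ) + (s : ℝ) • x ∈ D :=
        (convex_convexHull ℝ _) hgD hxD (by linarith [s.2.2]) s.2.1 (by ring)
      rw [hPdef]
      exact Set.mem_iUnion.mpr ⟨⟨i, hi⟩, hq2 ⟨i, hi⟩ hmemD⟩
    have hF1c : Continuous (F 1) := (hFh 1 hone).continuous
    have hgfar : ∀ t : I, ∀ z ∈ S, δ / 2 ≤ dist (g (t : ℝ)) z :=
      fun t => hgS (t : ℝ) t.2.1 t.2.2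
    have hom2 : gPath.Homotopic (Path.refl (⟨x, hx⟩ : ↥(Sᶜ))) := by
      refine mkHomotopic gPath (Path.refl _)
        (fun p : I × I => Subtype.mk (F 1 ((1 - (p.1 : ℝ)) • g ((p.2 : ℝ)) + (p.1 : ℝ) • x))
          (fun hmem => hdisj _ ⟨_, hcone p.1 p.2, rfl⟩ hmem)) ?_ ?_ ?_ ?_ ?_
      · refine Continuous.subtype_mk ?_ _
        refine hF1c.comp ?_
        exact ((continuous_const.sub (continuous_subtype_val.comp continuous_fst)).smul
          (hgc.comp (continuous_subtype_val.comp continuous_snd))).add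
          ((continuous_subtype_val.comp continuous_fst).smul continuous_const)
      · intro t
        apply Subtype.ext
        show F 1 ((1 - ((0 : I) : ℝ)) • g (t : ℝ) + ((0 : I) : ℝ) • x) = g (t : ℝ)
        have hc0 : ((0 : I) : ℝ) = 0 := rfl
        rw [hc0, sub_zero, one_smul, zero_smul, add_zero]
        exact hfix _ (hgfar t)
      · intro t
        apply Subtype.ext
        show F 1 ((1 - ((1 : I) : ℝ)) • g (t : ℝ) + ((1 : I) : ℝ) • x) = x
        have hc1 : ((1 : I) : ℝ) = 1 := rfl
        rw [hc1, sub_self, zero_smul, one_smul, zero_add]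
        exact hfix _ hxfar
      · intro s
        apply Subtype.ext
        show F 1 ((1 - (s : ℝ)) • g ((0 : I) : ℝ) + (s : ℝ) • x) = x
        have hc0 : ((0 : I) : ℝ) = 0 := rfl
        rw [hc0, hg0, sub_smul, one_smul, sub_add_cancel]
        exact hfix _ hxfar
      · intro s
        apply Subtype.ext
        show F 1 ((1 - (s : ℝ)) • g ((1 : I) : ℝ) + (s : ℝ) • x) = x
        have hc1 : ((1 : I) : ℝ) = 1 := rfl
        rw [hc1, hg1, sub_smul, one_smul, sub_add_cancel]
        exact hfix _ hxfar
    exact hγ₀ (hom1.trans hom2)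

end MainProof

end
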